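/- Let B_1 = B_2 = B_3 = C([-1,1], ℝ) and define π^1_2 = π^2_1 = π^1_3 = π^3_1 : f ↦ f(1) into ℝ, and π^2_3 : f ↦ (f(−1), f(1)), π^3_2 : f ↦ (f(1), f(−1)) into ℝ × ℝ. Then the canonical projection from the multi-pullback algebra B^π to B_2 is not surjective. -/
import Mathlib


noncomputable section

/-- The interval `[-1, 1]`. -/
abbrev II : Set ℝ := Set.Icc (-1 : ℝ) 1

/-- The point `1 ∈ [-1, 1]`. -/
def p1 : II := ⟨1, by norm_num⟩

/-- The point `-1 ∈ [-1, 1]`. -/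
def pm1 : II := ⟨-1, by norm_num⟩

/-- for `B_1 = B_2 = B_3 = C([-1,1],ℝ)` with `π^1_2 = π^2_1 = π^1_3 = π^3_1 :
f ↦ f(1)`, `π^2_3 : f ↦ (f(-1), f(1))` and `π^3_2 : f ↦ (f(1), f(-1))`, the canonical
projection from the multi-pullback `B^π` to `B_2` is not surjective. -/
theorem stmt5 :
    ¬ Function.Surjective
      (fun b : {t : C(II, ℝ) × C(II, ℝ) × C(II, ℝ) //
          t.1 p1 = t.2.1 p1 ∧ t.1 p1 = t.2.2 p1 ∧
          ((t.2.1 pm1, t.2.1 p1) : ℝ × ℝ) = (t.2.2 p1, t.2.2 pm1)} =>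
        b.val.2.1) := by
  intro h
  obtain ⟨⟨t, h1, h2, h3⟩, heq⟩ := h ⟨Subtype.val, continuous_subtype_val⟩
  simp only at heq
  rw [Prod.mk.injEq] at h3
  have key : t.2.1 pm1 = t.2.1 p1 := by
    rw [h3.1, ← h2, h1]
  rw [heq] at key
  simp [pm1, p1] at key
  norm_num at key
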